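/- Let κ be a GLC and let x, x̂ ∈ ℝ^{n_x}. If j ∈ {1,…,n_c} is such that the closed ball B(v(x̂), √(1+κ²)·‖x − x̂‖) in ℝ^{n_x+n_z} is contained in the lifted half-space 𝒱_j, then the closed ball B(z*(x̂), κ‖x − x̂‖) in ℝ^{n_z} is contained in Z_j(x). In other words, E(x) ⊆ D(x), where E(x) = {j : B(v(x̂), √(1+κ²)‖x−x̂‖) ⊆ 𝒱_j} and D(x) = {j : B(z*(x̂), κ‖x−x̂‖) ⊆ Z_j(x)}. -/

import Mathlib

/-- Lemma 5(b): if the lifted ball `B(v(x̂), √(1+κ²)‖x−x̂‖)` is contained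
in the lifted half-space `𝒱_j`, then `B(z*(x̂), κ‖x−x̂‖) ⊆ Z_j(x)`; i.e. `E(x) ⊆ D(x)`. -/
theorem lifted_ball_subset_implies_ball_subset
    (n_x n_z n_c : ℕ) (hnx : 0 < n_x) (hnz : 0 < n_z) (hnc : 0 < n_c)
    (H : Matrix (Fin n_z) (Fin n_z) ℝ) (hH : H.PosDef)
    (F : Matrix (Fin n_x) (Fin n_z) ℝ)
    (G : Matrix (Fin n_c) (Fin n_z) ℝ)
    (S : Matrix (Fin n_c) (Fin n_x) ℝ)
    (w : Fin n_c → ℝ)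
    (V : EuclideanSpace ℝ (Fin n_x) → EuclideanSpace ℝ (Fin n_z) → ℝ)
    (hV : ∀ x z, V x z = (1 / 2) * dotProduct z (H.mulVec z)
      + dotProduct x (F.mulVec z))
    (Z : EuclideanSpace ℝ (Fin n_x) → Set (Fin n_c) → Set (EuclideanSpace ℝ (Fin n_z)))
    (hZ : ∀ x I, Z x I =
      {z : EuclideanSpace ℝ (Fin n_z) | ∀ j ∈ I, dotProduct (G j) z ≤ dotProduct (S j) x + w j})
    (hfeas : ∀ x, (Z x Set.univ).Nonempty)
    (zstar : EuclideanSpace ℝ (Fin n_x) → Set (Fin n_c) → EuclideanSpace ℝ (Fin n_z))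
    (hmem : ∀ x I, zstar x I ∈ Z x I)
    (hopt : ∀ x I, ∀ z ∈ Z x I, V x (zstar x I) ≤ V x z)
    (huniq : ∀ x I, ∀ z ∈ Z x I, (∀ z' ∈ Z x I, V x z ≤ V x z') → z = zstar x I)
    (κ : ℝ) (hκ0 : 0 ≤ κ)
    (hGLC : ∀ (x₁ x₂ : EuclideanSpace ℝ (Fin n_x)) (I : Set (Fin n_c)),
      ‖zstar x₁ I - zstar x₂ I‖ ≤ κ * ‖x₁ - x₂‖)
    (x xh : EuclideanSpace ℝ (Fin n_x)) (j : Fin n_c)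
    (hE : Metric.closedBall
        ((WithLp.equiv 2 (EuclideanSpace ℝ (Fin n_x) × EuclideanSpace ℝ (Fin n_z))).symm
          (xh, zstar xh Set.univ))
        (Real.sqrt (1 + κ ^ 2) * ‖x - xh‖) ⊆
      {u : WithLp 2 (EuclideanSpace ℝ (Fin n_x) × EuclideanSpace ℝ (Fin n_z)) |
        dotProduct (G j) ((WithLp.equiv 2 _) u).2
          - dotProduct (S j) ((WithLp.equiv 2 _) u).1 ≤ w j}) :
    Metric.closedBall (zstar xh Set.univ) (κ * ‖x - xh‖) ⊆
      {z : EuclideanSpace ℝ (Fin n_z) |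
        dotProduct (G j) z ≤ dotProduct (S j) x + w j} := by
  intro z hz
  simp only [Metric.mem_closedBall, dist_eq_norm] at hz
  set u : WithLp 2 (EuclideanSpace ℝ (Fin n_x) × EuclideanSpace ℝ (Fin n_z)) :=
    (WithLp.equiv 2 (EuclideanSpace ℝ (Fin n_x) × EuclideanSpace ℝ (Fin n_z))).symm (x, z)
  have hu : u ∈ Metric.closedBall
      ((WithLp.equiv 2 (EuclideanSpace ℝ (Fin n_x) × EuclideanSpace ℝ (Fin n_z))).symm
        (xh, zstar xh Set.univ)) (Real.sqrt (1 + κ ^ 2) * ‖x - xh‖) := by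
    rw [Metric.mem_closedBall, WithLp.prod_dist_eq_of_L2]
    have hfst : (u.fst : EuclideanSpace ℝ (Fin n_x)) = x := rfl
    have hsnd : (u.snd : EuclideanSpace ℝ (Fin n_z)) = z := rfl
    have h1 : dist u.fst
        (((WithLp.equiv 2 (EuclideanSpace ℝ (Fin n_x) × EuclideanSpace ℝ (Fin n_z))).symm
          (xh, zstar xh Set.univ)).fst) = ‖x - xh‖ := by
      rw [hfst]; exact dist_eq_norm _ _
    have h2 : dist u.snd
        (((WithLp.equiv 2 (EuclideanSpace ℝ (Fin n_x) × EuclideanSpace ℝ (Fin n_z))).symm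
          (xh, zstar xh Set.univ)).snd) = ‖z - zstar xh Set.univ‖ := by
      rw [hsnd]; exact dist_eq_norm _ _
    rw [h1, h2]
    have hr : (0:ℝ) ≤ ‖x - xh‖ := norm_nonneg _
    have key : ‖x - xh‖ ^ 2 + ‖z - zstar xh Set.univ‖ ^ 2 ≤ (1 + κ ^ 2) * ‖x - xh‖ ^ 2 := by
      have : ‖z - zstar xh Set.univ‖ ^ 2 ≤ (κ * ‖x - xh‖) ^ 2 := by
        apply sq_le_sq' _ hz
        linarith [norm_nonneg (z - zstar xh Set.univ)]
      nlinarith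
    calc Real.sqrt (‖x - xh‖ ^ 2 + ‖z - zstar xh Set.univ‖ ^ 2)
        ≤ Real.sqrt ((1 + κ ^ 2) * ‖x - xh‖ ^ 2) := Real.sqrt_le_sqrt key
      _ = Real.sqrt (1 + κ ^ 2) * ‖x - xh‖ := by
          rw [Real.sqrt_mul (by positivity), Real.sqrt_sq hr]
  have := hE hu
  simp only [Set.mem_setOf_eq] at this ⊢
  have hfst : ((WithLp.equiv 2 (EuclideanSpace ℝ (Fin n_x) × EuclideanSpace ℝ (Fin n_z))) u).1
      = x := rfl
  have hsnd : ((WithLp.equiv 2 (EuclideanSpace ℝ (Fin n_x) × EuclideanSpace ℝ (Fin n_z))) u).2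
      = z := rfl
  rw [hfst, hsnd] at this
  linarith
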